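/- arXiv:1801.02359 — 4 statements merged into one kernel-verified Lean document; each statement's English description precedes it below -/
import Mathlib

section
/- For natural numbers k ≤ n and any real s, ∫_ℝ e^{sx − x²} H_n(x) H_k(x) dx = (√π · n! · 2^k / (n−k)!) · e^{s²/4} · s^{n−k} · ₁F₁(−k; n−k+1; −s²/2). -/
open Real MeasureTheory

/-- Physicists' Hermite polynomial `H n x = (-1)^n e^{x^2} (d/dx)^n e^{-x^2}`. -/
noncomputable def physHermite (n : ℕ) (x : ℝ) : ℝ :=
  (-1)^n * Real.exp (x^2) * iteratedDeriv n (fun y => Real.exp (-y^2)) x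

/-- Hermite function `φ k x = (2^k k! √π)^{-1/2} H_k(x) e^{-x²/2}`. -/
noncomputable def hermiteFn (k : ℕ) (x : ℝ) : ℝ :=
  (Real.sqrt (2^k * k.factorial * Real.sqrt Real.pi))⁻¹ * physHermite k x * Real.exp (-x^2/2)

/-- Confluent hypergeometric function `₁F₁(-k; b; x)` with nonpositive integer first
parameter `-k`; it is the polynomial `∑_{j=0}^{k} ((-k)_j/(b)_j) x^j/j!`, where the rising
factorial `(-k)_j = (-1)^j k!/(k-j)!`. -/
noncomputable def oneF1neg (k : ℕ) (b x : ℝ) : ℝ :=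
  ∑ j ∈ Finset.range (k+1),
    ((-1)^j * (k.descFactorial j : ℝ) / ∏ i ∈ Finset.range j, (b + i)) * x^j / (j.factorial : ℝ)

/-- GUE mean density at σ² = 1/2: partial sum of squared Hermite functions. -/
noncomputable def pGUE (n : ℕ) (x : ℝ) : ℝ := ∑ k ∈ Finset.range n, hermiteFn k x ^ 2

/-- GUE mean density with general variance σ². -/
noncomputable def pGUEvar (n : ℕ) (σ x : ℝ) : ℝ :=
  (σ * Real.sqrt 2)⁻¹ * pGUE n (x / (σ * Real.sqrt 2))

/-- The function τₙ from the GSE/GOE densities. -/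
noncomputable def tauFn (n : ℕ) (x : ℝ) : ℝ :=
  Real.sqrt (n/2) * hermiteFn (n-1) x *
    ((1/2) * ∫ t : ℝ, Real.sign (x - t) * hermiteFn n t)

/-- The function αₙ (for odd n) from the GOE density. -/
noncomputable def alphaFn (n : ℕ) (x : ℝ) : ℝ :=
  hermiteFn (n-1) x / ∫ t : ℝ, hermiteFn (n-1) t


open Polynomial Filter


noncomputable def PH : ℕ → Polynomial ℝ
  | 0 => 1
  | n+1 => Polynomial.C 2 * Polynomial.X * PH n - (PH n).derivative

lemma gauss_iteratedDeriv (m : ℕ) (x : ℝ) :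
    iteratedDeriv m (fun y => Real.exp (-y^2)) x
      = (-1:ℝ)^m * (PH m).eval x * Real.exp (-x^2) := by
  induction m generalizing x with
  | zero => simp [PH]
  | succ m ih =>
    rw [iteratedDeriv_succ]
    have hfun : iteratedDeriv m (fun y => Real.exp (-y^2))
        = fun x => (-1:ℝ)^m * (PH m).eval x * Real.exp (-x^2) := funext ih
    rw [hfun]
    have hx : HasDerivAt (fun x : ℝ => (-1:ℝ)^m * (PH m).eval x * Real.exp (-x^2))
        ((-1:ℝ)^(m+1) * (PH (m+1)).eval x * Real.exp (-x^2)) x := by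
      have h1 : HasDerivAt (fun y : ℝ => Real.exp (-y^2)) (Real.exp (-x^2) * (-(2*x))) x := by
        have : HasDerivAt (fun y : ℝ => -y^2) (-(2*x)) x := by
          exact (hasDerivAt_pow 2 x).neg.congr_deriv (by norm_num)
        exact this.exp
      have h2 := ((PH m).hasDerivAt x).const_mul ((-1:ℝ)^m)
      have := h2.mul h1
      refine this.congr_deriv ?_
      symm
      show (-1:ℝ)^(m+1) * (PH (m+1)).eval x * Real.exp (-x^2) = _
      simp only [PH, eval_sub, eval_mul, eval_C, eval_X]
      ring
    exact hx.deriv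


lemma PH_derivative : ∀ m : ℕ, (PH m).derivative = (2*m : ℕ) • PH (m-1) := by
  intro m
  induction m using Nat.strong_induction_on with
  | _ m ih =>
    match m with
    | 0 => simp [PH]
    | 1 =>
      show (Polynomial.C 2 * Polynomial.X * PH 0 - (PH 0).derivative).derivative = _
      simp only [PH, nsmul_eq_mul]
      norm_num [map_ofNat, PH]
    | (m+2) =>
      have ih1 := ih (m+1) (by omega)
      have ih0 := ih m (by omega)
      show (Polynomial.C 2 * Polynomial.X * PH (m+1) - (PH (m+1)).derivative).derivative
          = (2*(m+2) : ℕ) • PH (m+1)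
      simp only [derivative_sub, derivative_mul, derivative_C, derivative_X]
      rw [ih1]
      simp only [Nat.add_sub_cancel, map_nsmul]
      rw [ih0]
      rw [show PH (m+1) = Polynomial.C 2 * Polynomial.X * PH m - (PH m).derivative from rfl, ih0]
      simp only [nsmul_eq_mul, map_ofNat (Polynomial.C : ℝ →+* Polynomial ℝ) 2]
      push_cast
      ring

lemma Dpow_PH (j k : ℕ) :
    ((Polynomial.derivative : Module.End ℝ (Polynomial ℝ)) ^ j) (PH k)
      = (2^j * k.descFactorial j : ℕ) • PH (k - j) := by
  induction j with
  | zero => simp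
  | succ j ih =>
    rw [pow_succ', Module.End.mul_apply, ih, map_nsmul]
    show (2^j * k.descFactorial j : ℕ) • (PH (k-j)).derivative = _
    rw [PH_derivative (k-j), smul_smul]
    rw [show k - j - 1 = k - (j+1) by omega]
    congr 1
    rw [Nat.descFactorial_succ]
    ring

noncomputable def TT (s : ℝ) : Module.End ℝ (Polynomial ℝ) :=
  Polynomial.derivative + s • (1 : Module.End ℝ (Polynomial ℝ))

lemma TT_apply (s : ℝ) (p : Polynomial ℝ) : TT s p = p.derivative + Polynomial.C s * p := by
  simp [TT, Polynomial.smul_eq_C_mul]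

lemma Tpow_one (s : ℝ) (j : ℕ) : ((TT s) ^ j) (1 : Polynomial ℝ) = (s^j) • (1 : Polynomial ℝ) := by
  induction j with
  | zero => simp
  | succ j ih =>
    rw [pow_succ, Module.End.mul_apply]
    have h1 : TT s (1 : Polynomial ℝ) = s • (1 : Polynomial ℝ) := by simp [TT]
    rw [h1, _root_.map_smul, ih, smul_smul, pow_succ]
    ring_nf

lemma Tpow_PH (s : ℝ) (n k : ℕ) :
    ((TT s) ^ n) (PH k)
      = ∑ m ∈ Finset.range (n+1),
          (((n.choose m) * 2^m * k.descFactorial m : ℕ) * s^(n-m)) • PH (k-m) := by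
  have hcomm : Commute (Polynomial.derivative : Module.End ℝ (Polynomial ℝ))
      (s • (1:Module.End ℝ (Polynomial ℝ))) := (Commute.one_right _).smul_right s
  rw [TT, hcomm.add_pow]
  rw [LinearMap.sum_apply]
  refine Finset.sum_congr rfl fun m hm => ?_
  rw [Module.End.mul_apply, Module.End.mul_apply]
  have h1 : ((n.choose m : ℕ) : Module.End ℝ (Polynomial ℝ)) (PH k) = (n.choose m : ℕ) • PH k := by
    simp [Module.End.natCast_apply]
  rw [h1]
  have h2 : ((s • (1:Module.End ℝ (Polynomial ℝ))) ^ (n-m)) ((n.choose m : ℕ) • PH k)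
      = s^(n-m) • ((n.choose m : ℕ) • PH k) := by
    rw [_root_.smul_pow, one_pow]
    simp
  rw [h2, _root_.map_smul, map_nsmul, Dpow_PH]
  simp only [← Nat.cast_smul_eq_nsmul ℝ, smul_smul]
  congr 1
  push_cast
  ring

lemma tendsto_PE_atTop (p : Polynomial ℝ) (s : ℝ) {b : ℝ} (hb : 0 < b) :
    Tendsto (fun x => p.eval x * Real.exp (s*x - b*x^2)) atTop (nhds 0) := by
  have h1 : Tendsto (fun x => p.eval x / Real.exp x) atTop (nhds 0) :=
    Polynomial.tendsto_div_exp_atTop p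
  have h2 : Tendsto (fun x : ℝ => (1+s)*x - b*x^2) atTop atBot := by
    have hfe : (fun x : ℝ => (1+s)*x - b*x^2) = fun x => x * ((1+s) - b*x) := by
      funext x; ring
    rw [hfe]
    apply Tendsto.atTop_mul_atBot₀ tendsto_id
    have hbx : Tendsto (fun x : ℝ => b*x) atTop atTop :=
      Tendsto.const_mul_atTop hb tendsto_id
    have : Tendsto (fun x : ℝ => -(b*x)) atTop atBot := tendsto_neg_atTop_atBot.comp hbx
    have := tendsto_atBot_add_const_left atTop (1+s) this
    refine this.congr fun x => by ring
  have h3 : Tendsto (fun x => Real.exp ((1+s)*x - b*x^2)) atTop (nhds 0) :=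
    Real.tendsto_exp_atBot.comp h2
  have h4 := h1.mul h3
  rw [mul_zero] at h4
  refine Tendsto.congr (fun x => ?_) h4
  rw [div_mul_eq_mul_div, div_eq_iff (Real.exp_ne_zero x), mul_assoc, ← Real.exp_add]
  congr 2
  ring

lemma tendsto_PE_atBot (p : Polynomial ℝ) (s : ℝ) {b : ℝ} (hb : 0 < b) :
    Tendsto (fun x => p.eval x * Real.exp (s*x - b*x^2)) atBot (nhds 0) := by
  have h := tendsto_PE_atTop (p.comp (-Polynomial.X)) (-s) hb
  have h2 := h.comp tendsto_neg_atBot_atTop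
  refine h2.congr fun x => ?_
  simp only [Function.comp_apply, Polynomial.eval_comp, Polynomial.eval_neg, Polynomial.eval_X]
  rw [neg_neg]
  congr 2
  ring

lemma exists_bound_PE (p : Polynomial ℝ) (s : ℝ) :
    ∃ C : ℝ, ∀ x : ℝ, |p.eval x * Real.exp (s*x - (1/2)*x^2)| ≤ C := by
  have ht := tendsto_PE_atTop p s (show (0:ℝ) < 1/2 by norm_num)
  have hb := tendsto_PE_atBot p s (show (0:ℝ) < 1/2 by norm_num)
  have ht' : ∀ᶠ x in atTop, |p.eval x * Real.exp (s*x - (1/2)*x^2)| < 1 := by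
    have := ht.abs
    rw [abs_zero] at this
    exact this.eventually_lt_const one_pos
  have hb' : ∀ᶠ x in atBot, |p.eval x * Real.exp (s*x - (1/2)*x^2)| < 1 := by
    have := hb.abs
    rw [abs_zero] at this
    exact this.eventually_lt_const one_pos
  obtain ⟨A, hA⟩ := eventually_atTop.1 ht'
  obtain ⟨B, hB⟩ := eventually_atBot.1 hb'
  have hcont : ContinuousOn (fun x => p.eval x * Real.exp (s*x - (1/2)*x^2)) (Set.Icc B A) := by
    apply Continuous.continuousOn
    exact (p.continuous_aeval).mul (Real.continuous_exp.comp (by continuity))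
  obtain ⟨C0, hC0⟩ := (isCompact_Icc (a := B) (b := A)).exists_bound_of_continuousOn hcont
  refine ⟨max C0 1, fun x => ?_⟩
  by_cases h1 : x ≤ A
  · by_cases h2 : B ≤ x
    · refine le_trans ?_ (le_max_left C0 1)
      have h3 := hC0 x ⟨h2, h1⟩
      rwa [Real.norm_eq_abs] at h3
    · exact le_trans (hB x (le_of_not_ge h2)).le (le_max_right _ _)
  · exact le_trans (hA x (le_of_not_ge h1)).le (le_max_right _ _)

lemma integrable_PE (p : Polynomial ℝ) (s : ℝ) :
    Integrable fun x : ℝ => p.eval x * Real.exp (s*x - x^2) := by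
  obtain ⟨C, hC⟩ := exists_bound_PE p s
  have hint := (integrable_exp_neg_mul_sq (show (0:ℝ) < 1/2 by norm_num)).const_mul C
  apply Integrable.mono' hint
  · exact ((p.continuous_aeval).mul (Real.continuous_exp.comp (by continuity))).aestronglyMeasurable
  · refine Filter.Eventually.of_forall fun x => ?_
    have hsplit : Real.exp (s*x - x^2) = Real.exp (s*x - (1/2)*x^2) * Real.exp (-(1/2) * x^2) := by
      rw [← Real.exp_add]; congr 1; ring
    rw [Real.norm_eq_abs, hsplit, ← mul_assoc, abs_mul, abs_of_nonneg (Real.exp_nonneg _)]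
    exact mul_le_mul_of_nonneg_right (hC x) (Real.exp_nonneg _)

lemma integral_gauss_lin (s : ℝ) :
    ∫ x : ℝ, Real.exp (s*x - x^2) = Real.sqrt Real.pi * Real.exp (s^2/4) := by
  have h : ∀ x : ℝ, Real.exp (s*x - x^2) = Real.exp (s^2/4) * Real.exp (-(x - s/2)^2) := by
    intro x; rw [← Real.exp_add]; congr 1; ring
  simp_rw [h]
  rw [MeasureTheory.integral_const_mul]
  have h2 : ∫ x : ℝ, Real.exp (-(x - s/2)^2) = ∫ x : ℝ, Real.exp (-x^2) :=
    MeasureTheory.integral_sub_right_eq_self (fun y => Real.exp (-y^2)) (s/2)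
  rw [h2]
  have h3 : ∫ x : ℝ, Real.exp (-x^2) = Real.sqrt Real.pi := by
    have := integral_gaussian 1
    simpa using this
  rw [h3]; ring

lemma key_ibp (s : ℝ) : ∀ (m : ℕ) (p : Polynomial ℝ),
    ∫ x : ℝ, p.eval x * Real.exp (s*x) * iteratedDeriv m (fun y => Real.exp (-y^2)) x
      = (-1:ℝ)^m * ∫ x : ℝ, (((TT s)^m) p).eval x * Real.exp (s*x - x^2) := by
  intro m
  induction m with
  | zero =>
    intro p
    simp only [iteratedDeriv_zero, pow_zero, Module.End.one_apply, one_mul]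
    congr 1
    funext x
    rw [mul_assoc, ← Real.exp_add, ← sub_eq_add_neg]
  | succ m ih =>
    intro p
    set q : Polynomial ℝ := Polynomial.C s * p + p.derivative with hq
    set G : ℝ → ℝ := fun y => Real.exp (-y^2) with hG
    have hexp : ∀ y : ℝ, Real.exp (s*y - y^2) = Real.exp (s*y) * Real.exp (-y^2) := fun y => by
      rw [← Real.exp_add, sub_eq_add_neg]
    -- derivative computation
    have hu : ∀ x : ℝ, HasDerivAt (fun x => p.eval x * Real.exp (s*x) * iteratedDeriv m G x)
        (q.eval x * Real.exp (s*x) * iteratedDeriv m G x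
          + p.eval x * Real.exp (s*x) * iteratedDeriv (m+1) G x) x := by
      intro x
      have hfun : (fun x => p.eval x * Real.exp (s*x) * iteratedDeriv m G x)
          = fun x => (-1:ℝ)^m * ((p * PH m).eval x * Real.exp (s*x - x^2)) := by
        funext y
        rw [gauss_iteratedDeriv]
        simp only [Polynomial.eval_mul, hexp]
        ring
      rw [hfun]
      have h1 : HasDerivAt (fun y : ℝ => Real.exp (s*y - y^2))
          ((s - 2*x) * Real.exp (s*x - x^2)) x := by
        have hd : HasDerivAt (fun y : ℝ => s*y - y^2) (s - 2*x) x := by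
          exact (((hasDerivAt_id x).const_mul s).sub (hasDerivAt_pow 2 x)).congr_deriv (by norm_num)
        simpa [mul_comm] using hd.exp
      have h2 := (((p * PH m).hasDerivAt x).mul h1).const_mul ((-1:ℝ)^m)
      refine h2.congr_deriv ?_
      symm
      rw [gauss_iteratedDeriv, gauss_iteratedDeriv]
      simp only [PH, Polynomial.eval_sub, Polynomial.eval_mul, Polynomial.eval_C,
        Polynomial.eval_X, Polynomial.eval_add, Polynomial.derivative_mul, hq]
      simp only [hexp]
      ring
    have hInt : ∀ (r : Polynomial ℝ) (j : ℕ), Integrable fun x : ℝ =>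
        r.eval x * Real.exp (s*x) * iteratedDeriv j G x := by
      intro r j
      have hfr : (fun x : ℝ => r.eval x * Real.exp (s*x) * iteratedDeriv j G x)
          = fun x => (-1:ℝ)^j * ((r * PH j).eval x * Real.exp (s*x - x^2)) := by
        funext y
        rw [gauss_iteratedDeriv]
        simp only [Polynomial.eval_mul, hexp]
        ring
      rw [hfr]
      exact (integrable_PE (r * PH j) s).const_mul _
    have hzero : ∫ x : ℝ, (q.eval x * Real.exp (s*x) * iteratedDeriv m G x
        + p.eval x * Real.exp (s*x) * iteratedDeriv (m+1) G x) = 0 :=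
      integral_eq_zero_of_hasDerivAt_of_integrable hu ((hInt q m).add (hInt p (m+1))) (hInt p m)
    rw [integral_add (hInt q m) (hInt p (m+1))] at hzero
    have hB : ∫ x : ℝ, p.eval x * Real.exp (s*x) * iteratedDeriv (m+1) G x
        = - ∫ x : ℝ, q.eval x * Real.exp (s*x) * iteratedDeriv m G x := by linarith
    rw [hB, ih q]
    have hTq : ((TT s)^m) q = ((TT s)^(m+1)) p := by
      rw [pow_succ, Module.End.mul_apply]
      congr 1
      rw [TT_apply, hq]
      ring
    rw [hTq, pow_succ]
    ring

lemma integral_PH (s : ℝ) (j : ℕ) :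
    ∫ x : ℝ, (PH j).eval x * Real.exp (s*x - x^2)
      = Real.sqrt Real.pi * Real.exp (s^2/4) * s^j := by
  have hsq : ((-1:ℝ))^j * (-1:ℝ)^j = 1 := by rw [← mul_pow]; norm_num
  have h0 : (fun x : ℝ => (PH j).eval x * Real.exp (s*x - x^2))
      = fun x => (-1:ℝ)^j * ((1:Polynomial ℝ).eval x * Real.exp (s*x)
          * iteratedDeriv j (fun y => Real.exp (-y^2)) x) := by
    funext x
    rw [gauss_iteratedDeriv, Polynomial.eval_one,
      show Real.exp (s*x - x^2) = Real.exp (s*x) * Real.exp (-x^2) from by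
        rw [← Real.exp_add, sub_eq_add_neg]]
    have h2 : ((-1:ℝ))^(j*2) = 1 := by
      rw [pow_mul, pow_two]
      exact hsq
    linear_combination (-(eval x (PH j) * Real.exp (s*x) * Real.exp (-x^2))) * h2
  rw [h0, integral_const_mul, key_ibp s j 1, Tpow_one, ← mul_assoc, hsq, one_mul]
  have h1 : (fun x : ℝ => ((s^j) • (1:Polynomial ℝ)).eval x * Real.exp (s*x - x^2))
      = fun x => s^j * Real.exp (s*x - x^2) := by
    funext x
    simp
  rw [h1, integral_const_mul, integral_gauss_lin]
  ring

lemma physHermite_eval (m : ℕ) (x : ℝ) : physHermite m x = (PH m).eval x := by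
  have hsq : ((-1:ℝ))^m * (-1:ℝ)^m = 1 := by rw [← mul_pow]; norm_num
  have hexp : Real.exp (x^2) * Real.exp (-x^2) = 1 := by
    rw [← Real.exp_add]; simp
  unfold physHermite
  rw [gauss_iteratedDeriv]
  calc (-1:ℝ)^m * Real.exp (x^2) * ((-1:ℝ)^m * (PH m).eval x * Real.exp (-x^2))
      = ((-1:ℝ)^m*(-1:ℝ)^m) * (Real.exp (x^2) * Real.exp (-x^2)) * (PH m).eval x := by ring
    _ = (PH m).eval x := by rw [hsq, hexp]; ring

lemma sum_form (n k : ℕ) (s : ℝ) :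
    ∫ x : ℝ, Real.exp (s*x - x^2) * physHermite n x * physHermite k x
      = ∑ m ∈ Finset.range (n+1),
          ((n.choose m * 2^m * k.descFactorial m : ℕ) : ℝ) * s^(n-m)
            * (Real.sqrt Real.pi * Real.exp (s^2/4) * s^(k-m)) := by
  have hsq : ((-1:ℝ))^n * (-1:ℝ)^n = 1 := by rw [← mul_pow]; norm_num
  have hmain : (fun x : ℝ => Real.exp (s*x - x^2) * physHermite n x * physHermite k x)
      = fun x => (-1:ℝ)^n * ((PH k).eval x * Real.exp (s*x)
          * iteratedDeriv n (fun y => Real.exp (-y^2)) x) := by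
    funext x
    rw [physHermite_eval k x]
    unfold physHermite
    have hx : Real.exp (s*x - x^2) * Real.exp (x^2) = Real.exp (s*x) := by
      rw [← Real.exp_add]; ring_nf
    linear_combination ((-1:ℝ)^n * (PH k).eval x
      * iteratedDeriv n (fun y => Real.exp (-y^2)) x) * hx
  rw [hmain, integral_const_mul, key_ibp s n (PH k), ← mul_assoc, hsq, one_mul, Tpow_PH]
  have heval : (fun x : ℝ => (∑ m ∈ Finset.range (n+1),
        (((n.choose m) * 2^m * k.descFactorial m : ℕ) * s^(n-m)) • PH (k-m)).eval x
          * Real.exp (s*x - x^2))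
      = fun x => ∑ m ∈ Finset.range (n+1),
          (((n.choose m) * 2^m * k.descFactorial m : ℕ) * s^(n-m))
            * ((PH (k-m)).eval x * Real.exp (s*x - x^2)) := by
    funext x
    rw [Polynomial.eval_finset_sum, Finset.sum_mul]
    refine Finset.sum_congr rfl fun m _ => ?_
    rw [Polynomial.eval_smul, smul_eq_mul, mul_assoc]
  rw [heval, integral_finset_sum _ (fun m _ => ((integrable_PE (PH (k-m)) s).const_mul _))]
  refine Finset.sum_congr rfl fun m _ => ?_
  rw [integral_const_mul, integral_PH]

lemma prod_asc (a j : ℕ) :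
    ((a.factorial : ℝ)) * ∏ i ∈ Finset.range j, ((a:ℝ)+1+(i:ℝ)) = ((a+j).factorial : ℝ) := by
  induction j with
  | zero => simp
  | succ j ih =>
    rw [Finset.prod_range_succ, ← mul_assoc, ih, show a + (j+1) = (a+j)+1 by omega,
      Nat.factorial_succ]
    push_cast
    ring

lemma nat_id (n k j : ℕ) (hkn : k ≤ n) (hjk : j ≤ k) :
    n.choose (k-j) * k.descFactorial (k-j) * ((n-(k-j)).factorial * j.factorial)
      = n.factorial * k.descFactorial j := by
  have e1 : n.choose (k-j) * (k-j).factorial * (n-(k-j)).factorial = n.factorial :=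
    Nat.choose_mul_factorial_mul_factorial (by omega)
  have e2 : j.factorial * k.descFactorial (k-j) = k.factorial := by
    have := Nat.factorial_mul_descFactorial (show k-j ≤ k by omega)
    rwa [show k-(k-j) = j by omega] at this
  have e3 : (k-j).factorial * k.descFactorial j = k.factorial :=
    Nat.factorial_mul_descFactorial (by omega)
  calc n.choose (k-j) * k.descFactorial (k-j) * ((n-(k-j)).factorial * j.factorial)
      = (n.choose (k-j)) * ((n-(k-j)).factorial) * (j.factorial * k.descFactorial (k-j)) := by
        ring
    _ = (n.choose (k-j)) * ((n-(k-j)).factorial) * ((k-j).factorial * k.descFactorial j) := by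
        rw [e2, e3]
    _ = (n.choose (k-j) * (k-j).factorial * (n-(k-j)).factorial) * k.descFactorial j := by ring
    _ = n.factorial * k.descFactorial j := by rw [e1]

lemma final_algebra (n k : ℕ) (hkn : k ≤ n) (s : ℝ) :
    ∑ m ∈ Finset.range (n+1),
        ((n.choose m * 2^m * k.descFactorial m : ℕ) : ℝ) * s^(n-m)
          * (Real.sqrt Real.pi * Real.exp (s^2/4) * s^(k-m))
      = Real.sqrt Real.pi * (n.factorial : ℝ) * 2^k / ((n-k).factorial : ℝ)
          * Real.exp (s^2/4) * s^(n-k) * oneF1neg k ((n-k : ℕ) + 1) (-s^2/2) := by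
  have hsub : Finset.range (k+1) ⊆ Finset.range (n+1) := Finset.range_subset_range.2 (by omega)
  rw [← Finset.sum_subset hsub (fun m _ hm => by
    have hmk : k < m := by
      simp only [Finset.mem_range] at hm
      omega
    have : k.descFactorial m = 0 := Nat.descFactorial_eq_zero_iff_lt.2 hmk
    rw [this]
    push_cast
    ring)]
  rw [← Finset.sum_range_reflect]
  unfold oneF1neg
  rw [Finset.mul_sum]
  refine Finset.sum_congr rfl fun j hj => ?_
  rw [Finset.mem_range] at hj
  have hjk : j ≤ k := by omega
  rw [show k + 1 - 1 - j = k - j by omega]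
  rw [show n - (k-j) = (n-k)+j by omega, show k - (k-j) = j by omega]
  have hprod : (∏ i ∈ Finset.range j, (((n-k : ℕ):ℝ) + 1 + (i:ℝ)))
      = (((n-k)+j).factorial : ℝ) / (((n-k)).factorial : ℝ) := by
    rw [eq_div_iff (by positivity), mul_comm]
    exact prod_asc (n-k) j
  rw [hprod]
  have hnat := nat_id n k j hkn hjk
  have hnatR : ((n.choose (k-j) : ℝ)) * (k.descFactorial (k-j) : ℝ)
      * ((((n-k)+j).factorial : ℝ) * (j.factorial : ℝ))
      = (n.factorial : ℝ) * (k.descFactorial j : ℝ) := by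
    rw [show (n-k)+j = n - (k-j) by omega]
    exact_mod_cast hnat
  have h2 : ((2:ℝ))^(k-j) * 2^j = 2^k := by
    rw [← pow_add]
    congr 1
    omega
  have hs1 : s^((n-k)+j) = s^(n-k) * s^j := pow_add s _ _
  have hneg : (-s^2/2 : ℝ)^j = (-1:ℝ)^j * (s^j * s^j) / 2^j := by
    rw [show (-s^2/2 : ℝ) = -(s^2/2) by ring, neg_pow, div_pow, ← pow_mul,
      show 2*j = j + j by omega, pow_add]
    ring
  have hsq : ((-1:ℝ))^j * (-1:ℝ)^j = 1 := by rw [← mul_pow]; norm_num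
  push_cast
  rw [hs1, hneg]
  have hneg1 : ((-1:ℝ))^(j*2) = 1 := by rw [pow_mul, pow_two]; exact hsq
  field_simp
  ring_nf
  linear_combination
    (s^(n-k) * s^(j*2) * 2^(k-j) * 2^j) * hnatR
    + (s^(n-k) * s^(j*2) * ((n.factorial : ℝ) * (k.descFactorial j : ℝ))) * h2
    - (s^(n-k) * s^(j*2) * ((n.factorial : ℝ) * (k.descFactorial j : ℝ)) * 2^k) * hneg1

theorem integral_exp_mul_hermite_mul_hermite (n k : ℕ) (hkn : k ≤ n) (s : ℝ) :
    ∫ x : ℝ, Real.exp (s*x - x^2) * physHermite n x * physHermite k x =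
      Real.sqrt Real.pi * (n.factorial : ℝ) * 2^k / ((n-k).factorial : ℝ) *
        Real.exp (s^2/4) * s^(n-k) * oneF1neg k ((n-k : ℕ) + 1) (-s^2/2) := by
  rw [sum_form n k s]
  exact final_algebra n k hkn s
end

section
/- For the Hermite functions φ_k, the derivative of the partial sum of squares satisfies (d/dx) ∑_{i=0}^{n−1} φ_i(x)² = −√(2n) · φ_n(x) · φ_{n−1}(x). -/
open Real MeasureTheory

open Polynomial in
/-- Physicists' Hermite polynomials via recurrence. -/
noncomputable def physP : ℕ → Polynomial ℝ
  | 0 => 1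
  | n + 1 => 2 * Polynomial.X * physP n - Polynomial.derivative (physP n)

open Polynomial

lemma deriv_gauss (x : ℝ) : deriv (fun y : ℝ => Real.exp (-y^2)) x = -2*x * Real.exp (-x^2) := by
  rw [deriv_exp (by fun_prop)]
  simp
  ring

lemma iteratedDeriv_gauss (n : ℕ) (x : ℝ) :
    iteratedDeriv n (fun y : ℝ => Real.exp (-y^2)) x =
      (-1:ℝ)^n * aeval x (physP n) * Real.exp (-x^2) := by
  induction n generalizing x with
  | zero => simp [physP]
  | succ n ih =>
    rw [iteratedDeriv_succ, funext ih]
    rw [show (fun x : ℝ => (-1:ℝ)^n * aeval x (physP n) * Real.exp (-x^2))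
        = fun x : ℝ => (-1:ℝ)^n * (aeval x (physP n) * Real.exp (-x^2)) by funext y; ring]
    rw [deriv_const_mul _ (((physP n).differentiable_aeval.differentiableAt).fun_mul
        (by fun_prop : DifferentiableAt ℝ (fun y : ℝ => Real.exp (-y^2)) x))]
    rw [deriv_fun_mul ((physP n).differentiable_aeval.differentiableAt) (by fun_prop)]
    rw [Polynomial.deriv_aeval, deriv_gauss]
    show _ = (-1:ℝ)^(n+1) * aeval x (2 * X * physP n - derivative (physP n)) * _
    simp only [map_sub, map_mul, map_ofNat, aeval_X]
    ring

lemma physHermite_eval_s6 (n : ℕ) (x : ℝ) : physHermite n x = aeval x (physP n) := by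
  rw [physHermite, iteratedDeriv_gauss]
  rw [show (-1:ℝ)^n * Real.exp (x^2) * ((-1:ℝ)^n * aeval x (physP n) * Real.exp (-x^2))
      = ((-1:ℝ)^n)^2 * (Real.exp (x^2) * Real.exp (-x^2)) * aeval x (physP n) by ring]
  rw [← Real.exp_add]
  simp [← pow_mul, pow_mul']

lemma derivative_physP : ∀ n : ℕ, derivative (physP n) = ((2*n : ℕ) : Polynomial ℝ) * physP (n-1) := by
  intro n
  induction n using Nat.strong_induction_on with
  | _ n ih =>
    match n with
    | 0 => simp [physP]
    | 1 => simp [physP]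
    | (m+2) =>
      have h1 := ih (m+1) (by omega)
      have h0 := ih m (by omega)
      show derivative (2 * X * physP (m+1) - derivative (physP (m+1)))
          = ((2*(m+2) : ℕ) : Polynomial ℝ) * physP (m+1)
      rw [derivative_sub, derivative_mul, derivative_mul, h1]
      simp only [Nat.add_sub_cancel]
      rw [derivative_mul, h0]
      rw [show physP (m+1) = 2 * X * physP m - derivative (physP m) from rfl, h0]
      simp only [derivative_ofNat, derivative_natCast, derivative_X]
      push_cast
      ring

/-- Abbreviation for the normalizing constant. -/
noncomputable def hc (k : ℕ) : ℝ := (Real.sqrt (2^k * k.factorial * Real.sqrt Real.pi))⁻¹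

lemma hc_arg_pos (k : ℕ) : (0:ℝ) < 2^k * k.factorial * Real.sqrt Real.pi := by
  have := Real.sqrt_pos.mpr Real.pi_pos
  positivity

lemma sqrt_succ_arg (k : ℕ) :
    Real.sqrt (2^(k+1) * (k+1).factorial * Real.sqrt Real.pi)
      = Real.sqrt (2*(k+1)) * Real.sqrt (2^k * k.factorial * Real.sqrt Real.pi) := by
  rw [← Real.sqrt_mul (by positivity)]
  congr 1
  push_cast [Nat.factorial_succ]
  ring

lemma sqrt_half_mul (k : ℕ) : Real.sqrt (((k:ℝ)+1)/2) * Real.sqrt (2*((k:ℝ)+1)) = (k:ℝ)+1 := by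
  rw [← Real.sqrt_mul (by positivity)]
  rw [show ((k:ℝ)+1)/2 * (2*((k:ℝ)+1)) = ((k:ℝ)+1)^2 by ring]
  exact Real.sqrt_sq (by positivity)

lemma hc_succ (k : ℕ) : hc (k+1) = (Real.sqrt (2*((k:ℝ)+1)))⁻¹ * hc k := by
  rw [hc, hc, sqrt_succ_arg, mul_inv]

lemma sqrt_half_key (k : ℕ) :
    Real.sqrt (((k:ℝ)+1)/2) = ((k:ℝ)+1) / Real.sqrt (2*((k:ℝ)+1)) := by
  have h2 : Real.sqrt (2*((k:ℝ)+1)) > 0 := Real.sqrt_pos.mpr (by positivity)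
  rw [eq_div_iff h2.ne']
  exact sqrt_half_mul k

lemma L2 (k : ℕ) : Real.sqrt (((k:ℝ)+1)/2) * hc (k+1) = hc k / 2 := by
  have h2 : Real.sqrt (2*((k:ℝ)+1)) > 0 := Real.sqrt_pos.mpr (by positivity)
  have hsq : Real.sqrt (2*((k:ℝ)+1)) * Real.sqrt (2*((k:ℝ)+1)) = 2*((k:ℝ)+1) :=
    Real.mul_self_sqrt (by positivity)
  rw [sqrt_half_key, hc_succ]
  set t := Real.sqrt (2*((k:ℝ)+1)) with ht
  field_simp
  linear_combination (-hc k) * hsq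

lemma L1 (k : ℕ) : Real.sqrt ((k:ℝ)/2) * hc (k-1) = (k:ℝ) * hc k := by
  match k with
  | 0 => simp
  | (m+1) =>
    push_cast
    rw [sqrt_half_key, hc_succ, div_eq_mul_inv]
    ring

lemma hermiteFn_eq (k : ℕ) (x : ℝ) :
    hermiteFn k x = hc k * aeval x (physP k) * Real.exp (-x^2/2) := by
  rw [hermiteFn, physHermite_eval_s6, hc]

lemma hasDerivAt_exp_half (x : ℝ) :
    HasDerivAt (fun y : ℝ => Real.exp (-y^2/2)) (-x * Real.exp (-x^2/2)) x := by
  have h : HasDerivAt (fun y : ℝ => -y^2/2) (-x) x := by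
    have : HasDerivAt (fun y : ℝ => -y^2/2) (-(((2:ℕ):ℝ) * x ^ (2 - 1)) / 2) x :=
      (hasDerivAt_pow 2 x).neg.div_const 2
    convert this using 1
    push_cast
    ring
  have := h.exp
  rwa [mul_comm] at this

lemma hasDerivAt_hermiteFn (k : ℕ) (x : ℝ) :
    HasDerivAt (hermiteFn k)
      (Real.sqrt ((k:ℝ)/2) * hermiteFn (k-1) x
        - Real.sqrt (((k:ℝ)+1)/2) * hermiteFn (k+1) x) x := by
  have hP := (physP k).hasDerivAt_aeval (𝕜 := ℝ) x
  have h := (hP.mul (hasDerivAt_exp_half x)).const_mul (hc k)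
  have hfun : hermiteFn k = fun y => hc k * (aeval y (physP k) * Real.exp (-y^2/2)) := by
    funext y; rw [hermiteFn_eq]; ring
  have hPk1 : aeval x (physP (k+1))
      = 2*x*aeval x (physP k) - (2*(k:ℝ))*aeval x (physP (k-1)) := by
    rw [show physP (k+1) = 2 * X * physP k - derivative (physP k) from rfl]
    rw [derivative_physP]
    simp only [map_sub, map_mul, map_ofNat, aeval_X, map_natCast]
    push_cast
    ring
  have hval : Real.sqrt ((k:ℝ)/2) * hermiteFn (k-1) x
        - Real.sqrt (((k:ℝ)+1)/2) * hermiteFn (k+1) x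
      = hc k * (aeval x (derivative (physP k)) * Real.exp (-x^2/2)
          + aeval x (physP k) * (-x * Real.exp (-x^2/2))) := by
    rw [derivative_physP, hermiteFn_eq, hermiteFn_eq, hPk1]
    simp only [map_mul, map_natCast]
    push_cast
    linear_combination (aeval x (physP (k-1)) * Real.exp (-x^2/2)) * L1 k
      + (-(2*x*aeval x (physP k) - 2*(k:ℝ)*aeval x (physP (k-1))) * Real.exp (-x^2/2)) * L2 k
  rw [hval, hfun]
  exact h

lemma two_sqrt_half (r : ℝ) : 2 * Real.sqrt (r/2) = Real.sqrt (2*r) := by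
  rw [show 2*r = 4*(r/2) by ring, Real.sqrt_mul (by norm_num),
    show Real.sqrt 4 = 2 by rw [show (4:ℝ) = 2^2 by norm_num, Real.sqrt_sq (by norm_num)]]

theorem deriv_sum_sq_hermiteFn (n : ℕ) (x : ℝ) :
    deriv (fun y => ∑ i ∈ Finset.range n, hermiteFn i y ^ 2) x =
      -Real.sqrt (2*n) * hermiteFn n x * hermiteFn (n-1) x := by
  have H : HasDerivAt (fun y => ∑ i ∈ Finset.range n, hermiteFn i y ^ 2)
      (∑ i ∈ Finset.range n, (2:ℝ) * hermiteFn i x ^ 1 *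
        (Real.sqrt ((i:ℝ)/2) * hermiteFn (i-1) x
          - Real.sqrt (((i:ℝ)+1)/2) * hermiteFn (i+1) x)) x :=
    HasDerivAt.fun_sum fun i _ => by simpa using (hasDerivAt_hermiteFn i x).fun_pow 2
  rw [H.deriv]
  have key : ∀ i : ℕ, (2:ℝ) * hermiteFn i x ^ 1 *
        (Real.sqrt ((i:ℝ)/2) * hermiteFn (i-1) x
          - Real.sqrt (((i:ℝ)+1)/2) * hermiteFn (i+1) x)
      = (fun k : ℕ => Real.sqrt (2*(k:ℝ)) * hermiteFn k x * hermiteFn (k-1) x) i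
        - (fun k : ℕ => Real.sqrt (2*(k:ℝ)) * hermiteFn k x * hermiteFn (k-1) x) (i+1) := by
    intro i
    simp only [Nat.add_sub_cancel, pow_one]
    push_cast
    rw [← two_sqrt_half ((i:ℝ)), ← two_sqrt_half ((i:ℝ)+1)]
    ring
  rw [Finset.sum_congr rfl fun i _ => key i, Finset.sum_range_sub']
  simp
end

section
/- For every natural number n ≥ 1 and reals a ≤ x, ∫_a^x e^{−t²/2} H_n(t) dt = −2 ∑_{i=0}^{⌊(n−1)/2⌋} (2^i (n−1)!!/(n−1−2i)!!) [e^{−t²/2} H_{n−1−2i}(t)]_{t=a}^{t=x} + 𝟙{n even} · 2^{n/2} (n−1)!! ∫_a^x e^{−t²/2} dt. -/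
open Real MeasureTheory

section AuxHermite
open Polynomial

noncomputable def HP : ℕ → Polynomial ℝ
  | 0 => 1
  | (n+1) => 2 * Polynomial.X * HP n - (HP n).derivative

lemma HP_deriv (n : ℕ) : (HP n).derivative = ((2*n : ℕ) : Polynomial ℝ) * HP (n-1) := by
  induction n using Nat.strong_induction_on with
  | _ n ih =>
    match n with
    | 0 => simp [HP]
    | 1 =>
      show (2 * Polynomial.X * HP 0 - (HP 0).derivative).derivative = _
      show (2 * Polynomial.X * 1 - (1:Polynomial ℝ).derivative).derivative = _
      simp [HP]
    | (m+2) =>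
      have h1 := ih (m+1) (by omega)
      have h0 := ih m (by omega)
      simp only [Nat.add_sub_cancel] at h1
      show (2 * Polynomial.X * HP (m+1) - (HP (m+1)).derivative).derivative
        = ((2*(m+2) : ℕ) : Polynomial ℝ) * HP (m+1)
      have hm1 : HP (m+1) = 2 * Polynomial.X * HP m - (HP m).derivative := rfl
      rw [derivative_sub, derivative_mul, derivative_mul, h1, derivative_mul, h0, hm1, h0]
      simp only [derivative_natCast, derivative_X, derivative_ofNat]
      push_cast
      ring

lemma iter_exp (n : ℕ) : iteratedDeriv n (fun y => Real.exp (-y^2))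
    = fun x => (-1)^n * (Real.exp (-x^2) * (HP n).eval x) := by
  induction n with
  | zero => funext x; simp [HP]
  | succ n ih =>
    funext x
    rw [iteratedDeriv_succ, ih]
    have h1 : HasDerivAt (fun y:ℝ => -y^2) (-(2*x)) x := by
      simpa using (hasDerivAt_pow 2 x).fun_neg
    have h2 : HasDerivAt (fun y:ℝ => Real.exp (-y^2)) (Real.exp (-x^2) * (-(2*x))) x := h1.exp
    have h3 : HasDerivAt (fun y:ℝ => (-1:ℝ)^n * (Real.exp (-y^2) * (HP n).eval y))
        ((-1:ℝ)^n * ((Real.exp (-x^2) * (-(2*x))) * (HP n).eval x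
          + Real.exp (-x^2) * (HP n).derivative.eval x)) x :=
      (h2.mul ((HP n).hasDerivAt x)).const_mul _
    rw [h3.deriv]
    have : (HP (n+1)).eval x = 2*x*(HP n).eval x - (HP n).derivative.eval x := by
      show ((2 * Polynomial.X  * HP n - (HP n).derivative)).eval x = _
      simp
    rw [this]
    ring

lemma physHermite_eq (n : ℕ) (x : ℝ) : physHermite n x = (HP n).eval x := by
  rw [physHermite, iter_exp]
  have h1 : ((-1:ℝ)^n)*((-1:ℝ)^n) = 1 := by
    rw [← pow_add]; exact Even.neg_one_pow ⟨n, rfl⟩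
  have h2 : Real.exp (x^2) * Real.exp (-x^2) = 1 := by rw [← Real.exp_add]; simp
  calc (-1:ℝ)^n * Real.exp (x^2) * ((-1:ℝ)^n * (Real.exp (-x^2) * (HP n).eval x))
      = (((-1:ℝ)^n*(-1:ℝ)^n) * (Real.exp (x^2)*Real.exp (-x^2))) * (HP n).eval x := by ring
    _ = (HP n).eval x := by rw [h1, h2]; ring

lemma hasDerivAt_g (m : ℕ) (t : ℝ) :
    HasDerivAt (fun t => Real.exp (-t^2/2) * (HP m).eval t)
      ((1/2) * (Real.exp (-t^2/2) * ((2*m:ℝ) * (HP (m-1)).eval t - (HP (m+1)).eval t))) t := by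
  have h1 : HasDerivAt (fun y:ℝ => -y^2/2) (-t) t := by
    have := ((hasDerivAt_pow 2 t).neg).div_const 2
    simpa using this.congr_deriv (by push_cast; ring)
  have h2 : HasDerivAt (fun y:ℝ => Real.exp (-y^2/2)) (Real.exp (-t^2/2) * (-t)) t := h1.exp
  have h3 := h2.mul ((HP m).hasDerivAt t)
  convert h3 using 1
  all_goals try rfl
  have e1 : (HP (m+1)).eval t = 2*t*(HP m).eval t - (HP m).derivative.eval t := by
    show ((2 * Polynomial.X  * HP m - (HP m).derivative)).eval t = _; simp
  have e2 : (HP m).derivative.eval t = (2*m:ℝ) * (HP (m-1)).eval t := by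
    rw [HP_deriv m]; push_cast; simp
  rw [e1, e2]
  ring

lemma contE : Continuous (fun t : ℝ => Real.exp (-t^2/2)) := by continuity

lemma contk (k : ℕ) : Continuous (fun t : ℝ => Real.exp (-t^2/2) * (HP k).eval t) :=
  contE.mul (HP k).continuous

lemma key (m : ℕ) (a x : ℝ) :
    ∫ t in a..x, Real.exp (-t^2/2) * (HP (m+1)).eval t
      = (2*m:ℝ) * (∫ t in a..x, Real.exp (-t^2/2) * (HP (m-1)).eval t)
        - 2 * (Real.exp (-x^2/2) * (HP m).eval x - Real.exp (-a^2/2) * (HP m).eval a) := by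
  have FTC : ∫ t in a..x,
      (1/2) * (Real.exp (-t^2/2) * ((2*m:ℝ) * (HP (m-1)).eval t - (HP (m+1)).eval t))
      = Real.exp (-x^2/2) * (HP m).eval x - Real.exp (-a^2/2) * (HP m).eval a := by
    apply intervalIntegral.integral_eq_sub_of_hasDerivAt (fun t _ => hasDerivAt_g m t)
    exact (Continuous.intervalIntegrable (by
      exact continuous_const.mul (contE.mul ((continuous_const.mul (HP (m-1)).continuous).sub
        (HP (m+1)).continuous))) a x)
  have hrw : ∀ t : ℝ, Real.exp (-t^2/2) * (HP (m+1)).eval t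
      = (2*m:ℝ) * (Real.exp (-t^2/2) * (HP (m-1)).eval t)
        - 2 * ((1/2) * (Real.exp (-t^2/2) * ((2*m:ℝ) * (HP (m-1)).eval t - (HP (m+1)).eval t))) := by
    intro t; ring
  rw [intervalIntegral.integral_congr (fun t _ => hrw t)]
  rw [intervalIntegral.integral_sub, intervalIntegral.integral_const_mul,
    intervalIntegral.integral_const_mul, FTC]
  · exact ((contk (m-1)).intervalIntegrable a x).const_mul _
  · apply IntervalIntegrable.const_mul
    exact (Continuous.intervalIntegrable (by
      exact continuous_const.mul (contE.mul ((continuous_const.mul (HP (m-1)).continuous).sub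
        (HP (m+1)).continuous))) a x)

lemma main_ind (a x : ℝ) : ∀ n : ℕ, 1 ≤ n →
    ∫ t in a..x, Real.exp (-t^2/2) * (HP n).eval t =
      -2 * ∑ i ∈ Finset.range ((n-1)/2 + 1),
        (2^i * (Nat.doubleFactorial (n-1) : ℝ) / (Nat.doubleFactorial (n-1-2*i) : ℝ)) *
          (Real.exp (-x^2/2) * (HP (n-1-2*i)).eval x
            - Real.exp (-a^2/2) * (HP (n-1-2*i)).eval a)
      + (if Even n then (2:ℝ)^(n/2) * (Nat.doubleFactorial (n-1) : ℝ) else 0) *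
          ∫ t in a..x, Real.exp (-t^2/2) := by
  intro n
  induction n using Nat.strong_induction_on with
  | _ n ih =>
    intro hn
    match n with
    | 1 =>
      have := key 0 a x
      norm_num [Nat.doubleFactorial] at this ⊢
      rw [this]
    | 2 =>
      have := key 1 a x
      have h0 : (HP 0) = 1 := rfl
      norm_num [Nat.doubleFactorial, h0] at this ⊢
      rw [this]; ring
    | (m+3) =>
      have hk := key (m+2) a x
      have hih := ih (m+1) (by omega) (by omega)
      simp only [show m+2-1 = m+1 from rfl, show m+3-1 = m+2 from rfl,
        show m+1-1 = m from rfl, show m+2+1 = m+3 from rfl] at hk hih ⊢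
      rw [hk, hih]
      -- abbreviations
      set E := ∫ t in a..x, Real.exp (-t^2/2) with hE
      set G := fun k : ℕ => Real.exp (-x^2/2) * (HP k).eval x - Real.exp (-a^2/2) * (HP k).eval a
        with hG
      have hsum : ∑ i ∈ Finset.range ((m+2)/2 + 1),
            (2^i * (Nat.doubleFactorial (m+2) : ℝ) / (Nat.doubleFactorial (m+2-2*i) : ℝ)) * G (m+2-2*i)
          = (2*((m:ℝ)+2)) * ∑ i ∈ Finset.range (m/2 + 1),
              (2^i * (Nat.doubleFactorial m : ℝ) / (Nat.doubleFactorial (m-2*i) : ℝ)) * G (m-2*i)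
            + G (m+2) := by
        rw [show (m+2)/2 + 1 = (m/2+1)+1 by omega, Finset.sum_range_succ', Finset.mul_sum]
        congr 1
        · apply Finset.sum_congr rfl
          intro i hi
          rw [show m+2-2*(i+1) = m-2*i by omega]
          have hd : ((m+2).doubleFactorial : ℝ) = ((m:ℝ)+2) * (m.doubleFactorial : ℝ) := by
            rw [Nat.doubleFactorial_add_two]; push_cast; ring
          rw [hd]; ring
        · have hpos : (0:ℝ) < ((m+2).doubleFactorial : ℝ) := by
            exact_mod_cast Nat.doubleFactorial_pos (m+2)
          rw [show m+2-2*0 = m+2 by omega]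
          rw [pow_zero, one_mul, div_self hpos.ne', one_mul]
      have heven : (if Even (m+3) then (2:ℝ)^((m+3)/2) * ((m+2).doubleFactorial : ℝ) else 0)
          = (2*((m:ℝ)+2)) * (if Even (m+1) then (2:ℝ)^((m+1)/2) * (m.doubleFactorial : ℝ) else 0) := by
        have hiff : Even (m+3) ↔ Even (m+1) := by
          constructor
          · rintro ⟨k, hk⟩; exact ⟨k-1, by omega⟩
          · rintro ⟨k, hk⟩; exact ⟨k+1, by omega⟩
        by_cases h : Even (m+1)
        · rw [if_pos (hiff.mpr h), if_pos h,
            show (m+3)/2 = (m+1)/2 + 1 by omega, pow_succ,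
            show ((m+2).doubleFactorial : ℝ) = ((m:ℝ)+2) * (m.doubleFactorial : ℝ) by
              rw [Nat.doubleFactorial_add_two]; push_cast; ring]
          ring
        · rw [if_neg (fun hc => h (hiff.mp hc)), if_neg h, mul_zero]
      rw [hsum, heven]
      push_cast
      ring

end AuxHermite

theorem integral_exp_hermite_antideriv (n : ℕ) (hn : 1 ≤ n) (a x : ℝ) (hax : a ≤ x) :
    ∫ t in a..x, Real.exp (-t^2/2) * physHermite n t =
      -2 * ∑ i ∈ Finset.range ((n-1)/2 + 1),
        (2^i * (Nat.doubleFactorial (n-1) : ℝ) / (Nat.doubleFactorial (n-1-2*i) : ℝ)) *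
          (Real.exp (-x^2/2) * physHermite (n-1-2*i) x
            - Real.exp (-a^2/2) * physHermite (n-1-2*i) a)
      + (if Even n then (2:ℝ)^(n/2) * (Nat.doubleFactorial (n-1) : ℝ) else 0) *
          ∫ t in a..x, Real.exp (-t^2/2) := by
  simp only [physHermite_eq]
  exact main_ind a x n hn
end

section
/- Let p_u(x) = ∑_{k=0}^{n−1} φ_k(x)² and τ_n(x) = √(n/2) φ_{n−1}(x) · (1/2)∫_ℝ sign(x−t) φ_n(t) dt. Then 2τ_n'''(x) + 2(2n − 1 − x²) τ_n'(x) − 4x τ_n(x) = (12n − 1 − 6x²) p_u'(x) + 6x p_u(x) for all real x. -/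
open Real MeasureTheory

namespace TauOde
open Polynomial

noncomputable def PH : ℕ → Polynomial ℝ
  | 0 => 1
  | n+1 => 2 * X * PH n - derivative (PH n)

lemma iteratedDeriv_gauss (n : ℕ) (x : ℝ) :
    iteratedDeriv n (fun y : ℝ => Real.exp (-y^2)) x
      = (-1)^n * (PH n).eval x * Real.exp (-x^2) := by
  induction n generalizing x with
  | zero => simp [PH]
  | succ n ih =>
    rw [iteratedDeriv_succ]
    have hfun : iteratedDeriv n (fun y : ℝ => Real.exp (-y^2))
        = fun y => (-1)^n * (PH n).eval y * Real.exp (-y^2) := funext fun y => ih y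
    rw [hfun]
    have h1 : HasDerivAt (fun y : ℝ => (PH n).eval y) ((derivative (PH n)).eval x) x :=
      (PH n).hasDerivAt x
    have hinner : HasDerivAt (fun y : ℝ => -y^2) (-(2*x)) x := by
      have := (hasDerivAt_pow 2 x).neg
      refine this.congr_deriv (Eq.symm ?_)
      ring
    have h2 : HasDerivAt (fun y : ℝ => Real.exp (-y^2)) (Real.exp (-x^2) * -(2*x)) x :=
      hinner.exp
    have h := ((h1.const_mul ((-1:ℝ)^n)).fun_mul h2)
    rw [h.deriv]
    have hev : (PH (n+1)).eval x = 2*x*(PH n).eval x - (derivative (PH n)).eval x := by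
      simp [PH]
    rw [hev, pow_succ]
    ring

lemma physHermite_eq (n : ℕ) (x : ℝ) : physHermite n x = (PH n).eval x := by
  unfold physHermite
  rw [iteratedDeriv_gauss]
  have h1 : (-1:ℝ)^n * (-1)^n = 1 := by
    rw [← pow_add, ← two_mul, pow_mul]
    norm_num
  have h2 : Real.exp (x^2) * Real.exp (-x^2) = 1 := by
    rw [← Real.exp_add]; simp
  calc (-1:ℝ)^n * Real.exp (x^2) * ((-1)^n * (PH n).eval x * Real.exp (-x^2))
      = ((-1:ℝ)^n * (-1)^n) * (Real.exp (x^2) * Real.exp (-x^2)) * (PH n).eval x := by ring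
    _ = (PH n).eval x := by rw [h1, h2]; ring

lemma PH_deriv_succ (n : ℕ) : derivative (PH (n+1)) = C ((2*(n+1) : ℝ)) * PH n := by
  induction n with
  | zero =>
    show derivative (2 * X * PH 0 - derivative (PH 0)) = _
    show derivative (2 * X * (1:Polynomial ℝ) - derivative (1:Polynomial ℝ)) = _
    simp only [mul_one, derivative_one, sub_zero, derivative_mul, derivative_ofNat,
      derivative_X, zero_mul, zero_add, mul_one, Nat.cast_zero]
    simp only [map_mul, map_add, map_one, map_ofNat]
    have : PH 0 = 1 := rfl
    rw [this]
    ring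
  | succ m ih =>
    have hdef : PH (m+1+1) = 2 * X * PH (m+1) - derivative (PH (m+1)) := rfl
    rw [hdef, derivative_sub, derivative_mul, ih, derivative_C_mul]
    have hdef2 : PH (m+1) = 2 * X * PH m - derivative (PH m) := rfl
    rw [hdef2]
    simp only [derivative_mul, derivative_ofNat, derivative_X, zero_mul, mul_one, zero_add,
      map_mul, map_add, map_one, map_ofNat, Nat.cast_add, Nat.cast_one]
    ring

lemma PH_deriv (n : ℕ) : derivative (PH n) = C ((2*n : ℝ)) * PH (n-1) := by
  cases n with
  | zero => simp [PH]
  | succ m =>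
    rw [PH_deriv_succ m]
    norm_num

/-- The normalizing constant. -/
noncomputable def K (k : ℕ) : ℝ := (Real.sqrt (2^k * k.factorial * Real.sqrt Real.pi))⁻¹

lemma hermiteFn_eq (k : ℕ) : hermiteFn k = fun x => K k * (PH k).eval x * Real.exp (-x^2/2) :=
  funext fun x => by rw [hermiteFn, physHermite_eq]; rfl

lemma base_pos (k : ℕ) : (0:ℝ) < 2^k * k.factorial * Real.sqrt Real.pi := by
  have := Real.sqrt_pos.2 Real.pi_pos
  positivity

lemma K_pos (k : ℕ) : 0 < K k := by
  unfold K
  exact inv_pos.2 (Real.sqrt_pos.2 (base_pos k))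

lemma K_succ (k : ℕ) : Real.sqrt (2*((k:ℝ)+1)) * K (k+1) = K k := by
  unfold K
  have h : (2:ℝ)^(k+1) * (k+1).factorial * Real.sqrt Real.pi
      = (2*((k:ℝ)+1)) * (2^k * k.factorial * Real.sqrt Real.pi) := by
    rw [Nat.factorial_succ]
    push_cast
    ring
  rw [h, Real.sqrt_mul (by positivity : (0:ℝ) ≤ 2*((k:ℝ)+1)) (2^k * k.factorial * Real.sqrt Real.pi), mul_inv]
  rw [← mul_assoc, mul_inv_cancel₀ (by positivity), one_mul]

lemma K_mul (k : ℕ) : K (k+1) * (2*((k:ℝ)+1)) = Real.sqrt (2*((k:ℝ)+1)) * K k := by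
  have h := K_succ k
  have hs : Real.sqrt (2*((k:ℝ)+1)) * Real.sqrt (2*((k:ℝ)+1)) = 2*((k:ℝ)+1) :=
    Real.mul_self_sqrt (by positivity)
  linear_combination (-(K (k+1))) * hs + Real.sqrt (2*((k:ℝ)+1)) * h

lemma hermiteFn_hasDerivAt (k : ℕ) (x : ℝ) :
    HasDerivAt (hermiteFn k)
      (K k * ((derivative (PH k)).eval x - x * (PH k).eval x) * Real.exp (-x^2/2)) x := by
  rw [hermiteFn_eq]
  have h1 : HasDerivAt (fun y : ℝ => (PH k).eval y) ((derivative (PH k)).eval x) x :=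
    (PH k).hasDerivAt x
  have hinner : HasDerivAt (fun y : ℝ => -y^2/2) (-x) x := by
    have := ((hasDerivAt_pow 2 x).neg.div_const 2)
    refine this.congr_deriv (Eq.symm ?_)
    ring
  have h2 : HasDerivAt (fun y : ℝ => Real.exp (-y^2/2)) (Real.exp (-x^2/2) * -x) x :=
    hinner.exp
  have h := (h1.const_mul (K k)).mul h2
  refine h.congr_deriv (Eq.symm ?_)
  ring

lemma hermiteFn_raise (k : ℕ) (x : ℝ) :
    HasDerivAt (hermiteFn k)
      (x * hermiteFn k x - Real.sqrt (2*((k:ℝ)+1)) * hermiteFn (k+1) x) x := by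
  have h := hermiteFn_hasDerivAt k x
  convert h using 1
  rw [hermiteFn_eq, hermiteFn_eq]
  simp only
  have hev : (PH (k+1)).eval x = 2*x*(PH k).eval x - (derivative (PH k)).eval x := by simp [PH]
  have hK := K_succ k
  calc x * (K k * (PH k).eval x * Real.exp (-x^2/2))
        - Real.sqrt (2*((k:ℝ)+1)) * (K (k+1) * (PH (k+1)).eval x * Real.exp (-x^2/2))
      = x * (K k * (PH k).eval x * Real.exp (-x^2/2))
        - (Real.sqrt (2*((k:ℝ)+1)) * K (k+1)) * (PH (k+1)).eval x * Real.exp (-x^2/2) := by ring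
    _ = x * (K k * (PH k).eval x * Real.exp (-x^2/2))
        - K k * (2*x*(PH k).eval x - (derivative (PH k)).eval x) * Real.exp (-x^2/2) := by
          rw [hK, hev]
    _ = K k * ((derivative (PH k)).eval x - x * (PH k).eval x) * Real.exp (-x^2/2) := by ring

lemma hermiteFn_lower (k : ℕ) (x : ℝ) :
    HasDerivAt (hermiteFn k)
      (-x * hermiteFn k x + Real.sqrt (2*(k:ℝ)) * hermiteFn (k-1) x) x := by
  have h := hermiteFn_hasDerivAt k x
  convert h using 1
  rw [hermiteFn_eq, hermiteFn_eq]
  simp only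
  rw [PH_deriv k]
  cases k with
  | zero =>
    simp
    ring
  | succ m =>
    have hK := K_mul m
    have hc : ((m+1:ℕ):ℝ) = (m:ℝ)+1 := by push_cast; ring
    simp only [Nat.add_sub_cancel, eval_mul, eval_C]
    calc -x * (K (m+1) * (PH (m+1)).eval x * Real.exp (-x^2/2))
          + Real.sqrt (2*((m+1:ℕ):ℝ)) * (K m * (PH m).eval x * Real.exp (-x^2/2))
        = -x * (K (m+1) * (PH (m+1)).eval x * Real.exp (-x^2/2))
          + (Real.sqrt (2*((m:ℝ)+1)) * K m) * (PH m).eval x * Real.exp (-x^2/2) := by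
            rw [hc]; ring
      _ = -x * (K (m+1) * (PH (m+1)).eval x * Real.exp (-x^2/2))
          + (K (m+1) * (2*((m:ℝ)+1))) * (PH m).eval x * Real.exp (-x^2/2) := by rw [hK]
      _ = K (m+1) * (2*((m+1:ℕ):ℝ) * (PH m).eval x - x * (PH (m+1)).eval x)
            * Real.exp (-x^2/2) := by rw [hc]; ring

end TauOde
namespace TauOde
open Polynomial

lemma three_term (k : ℕ) (x : ℝ) :
    Real.sqrt (2*((k:ℝ)+1)) * hermiteFn (k+1) x
      = 2*x*hermiteFn k x - Real.sqrt (2*(k:ℝ)) * hermiteFn (k-1) x := by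
  have h1 := (hermiteFn_raise k x).unique (hermiteFn_lower k x)
  linarith [h1]

lemma pGUE_closed (n : ℕ) (x : ℝ) :
    pGUE n x = n * hermiteFn (n-1) x ^ 2 + n * hermiteFn n x ^ 2
      - Real.sqrt (2*(n:ℝ)) * x * hermiteFn (n-1) x * hermiteFn n x := by
  induction n with
  | zero => simp [pGUE]
  | succ m ih =>
    have hstep : pGUE (m+1) x = pGUE m x + hermiteFn m x ^ 2 := by
      rw [pGUE, pGUE, Finset.sum_range_succ]
    rw [hstep, ih]
    have hr := three_term m x
    have ha : Real.sqrt (2*((m:ℝ))) * Real.sqrt (2*((m:ℝ))) = 2*(m:ℝ) :=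
      Real.mul_self_sqrt (by positivity)
    have hb : Real.sqrt (2*((m:ℝ)+1)) * Real.sqrt (2*((m:ℝ)+1)) = 2*((m:ℝ)+1) :=
      Real.mul_self_sqrt (by positivity)
    have hsub : (m+1) - 1 = m := rfl
    rw [hsub]
    push_cast
    set a := Real.sqrt (2*((m:ℝ))) with ha0
    set b := Real.sqrt (2*((m:ℝ)+1)) with hb0
    set f := hermiteFn (m-1) x
    set g := hermiteFn m x
    set h := hermiteFn (m+1) x
    -- goal: m f^2 + m g^2 - a x f g + g^2 = (m+1) g^2 + (m+1) h^2 - b x g h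
    linear_combination (-(f^2)/2) * ha + (h^2/2) * hb
      + (x*g - (2*x*g - a*f) - (b*h - 2*x*g + a*f)/2) * hr

lemma pGUE_hasDerivAt (n : ℕ) (x : ℝ) :
    HasDerivAt (pGUE n)
      (-(Real.sqrt (2*(n:ℝ))) * hermiteFn (n-1) x * hermiteFn n x) x := by
  have hterm : ∀ k : ℕ, HasDerivAt (fun y => hermiteFn k y ^ 2)
      (Real.sqrt (2*(k:ℝ)) * hermiteFn (k-1) x * hermiteFn k x
        - Real.sqrt (2*((k:ℝ)+1)) * hermiteFn k x * hermiteFn (k+1) x) x := by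
    intro k
    have h := (hermiteFn_raise k x).pow 2
    have h2 := three_term k x
    refine h.congr_deriv (Eq.symm ?_)
    push_cast
    linear_combination (hermiteFn k x) * h2
  have hsum := HasDerivAt.fun_sum (u := Finset.range n)
    (A := fun k y => hermiteFn k y ^ 2) (fun k _ => hterm k)
  have htel : ∑ k ∈ Finset.range n,
      (Real.sqrt (2*(k:ℝ)) * hermiteFn (k-1) x * hermiteFn k x
        - Real.sqrt (2*((k:ℝ)+1)) * hermiteFn k x * hermiteFn (k+1) x)
      = -(Real.sqrt (2*(n:ℝ))) * hermiteFn (n-1) x * hermiteFn n x := by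
    calc ∑ k ∈ Finset.range n,
        (Real.sqrt (2*(k:ℝ)) * hermiteFn (k-1) x * hermiteFn k x
          - Real.sqrt (2*((k:ℝ)+1)) * hermiteFn k x * hermiteFn (k+1) x)
        = ∑ k ∈ Finset.range n,
          ((fun j : ℕ => Real.sqrt (2*(j:ℝ)) * hermiteFn (j-1) x * hermiteFn j x) k
            - (fun j : ℕ => Real.sqrt (2*(j:ℝ)) * hermiteFn (j-1) x * hermiteFn j x) (k+1)) := by
          refine Finset.sum_congr rfl (fun k _ => ?_)
          have hc : ((k+1:ℕ):ℝ) = (k:ℝ)+1 := by push_cast; ring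
          simp only [Nat.add_sub_cancel, hc]
      _ = (fun j : ℕ => Real.sqrt (2*(j:ℝ)) * hermiteFn (j-1) x * hermiteFn j x) 0
            - (fun j : ℕ => Real.sqrt (2*(j:ℝ)) * hermiteFn (j-1) x * hermiteFn j x) n :=
          Finset.sum_range_sub' _ n
      _ = -(Real.sqrt (2*(n:ℝ))) * hermiteFn (n-1) x * hermiteFn n x := by
          norm_num
  rw [htel] at hsum
  exact hsum
end TauOde
namespace TauOde
open Polynomial Set

lemma integrable_xpow_gauss (i : ℕ) :
    Integrable (fun x : ℝ => x ^ i * Real.exp (-x^2/2)) := by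
  have hbound : Integrable (fun x : ℝ =>
      ((i.factorial : ℝ) * Real.exp 1) * Real.exp (-(1/4 : ℝ) * x^2)) :=
    (integrable_exp_neg_mul_sq (by norm_num : (0:ℝ) < 1/4)).const_mul _
  refine hbound.mono' ?_ ?_
  · refine Continuous.aestronglyMeasurable ?_
    exact (continuous_pow i).mul (((continuous_pow 2).neg.div_const 2).rexp)
  · filter_upwards with x
    have h1 : |x|^i ≤ (i.factorial : ℝ) * Real.exp |x| := by
      have hs := Real.sum_le_exp_of_nonneg (abs_nonneg x) (i+1)
      have h2 : |x|^i / (i.factorial : ℝ) ≤ Real.exp |x| := by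
        refine le_trans ?_ hs
        exact Finset.single_le_sum (f := fun j => |x|^j / (j.factorial : ℝ))
          (fun j _ => by positivity) (Finset.self_mem_range_succ i)
      rw [div_le_iff₀ (by positivity)] at h2
      linarith [h2]
    have h3 : Real.exp (|x| - x^2/2) ≤ Real.exp (1 - x^2/4) := by
      apply Real.exp_le_exp.2
      nlinarith [sq_nonneg (|x|/2 - 1), sq_abs x]
    calc ‖x ^ i * Real.exp (-x^2/2)‖ = |x|^i * Real.exp (-x^2/2) := by
          rw [norm_mul, norm_pow, Real.norm_eq_abs, Real.norm_eq_abs, Real.abs_exp]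
      _ ≤ ((i.factorial : ℝ) * Real.exp |x|) * Real.exp (-x^2/2) := by
          apply mul_le_mul_of_nonneg_right h1 (Real.exp_pos _).le
      _ = (i.factorial : ℝ) * Real.exp (|x| - x^2/2) := by
          rw [mul_assoc, ← Real.exp_add, show |x| + -x^2/2 = |x| - x^2/2 from by ring]
      _ ≤ (i.factorial : ℝ) * Real.exp (1 - x^2/4) := by
          apply mul_le_mul_of_nonneg_left h3 (by positivity)
      _ = ((i.factorial : ℝ) * Real.exp 1) * Real.exp (-(1/4 : ℝ) * x^2) := by
          rw [mul_assoc, ← Real.exp_add, show (1:ℝ) + -(1/4) * x^2 = 1 - x^2/4 from by ring]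

lemma hermiteFn_integrable (n : ℕ) : Integrable (hermiteFn n) := by
  have hfun : hermiteFn n = fun x => ∑ i ∈ Finset.range ((PH n).natDegree + 1),
      (K n * (PH n).coeff i) * (x ^ i * Real.exp (-x^2/2)) := by
    funext x
    rw [hermiteFn_eq]
    simp only
    rw [eval_eq_sum_range, Finset.mul_sum, Finset.sum_mul]
    exact Finset.sum_congr rfl fun i _ => by ring
  rw [hfun]
  exact integrable_finset_sum _ fun i _ => (integrable_xpow_gauss i).const_mul _

lemma hermiteFn_continuous (n : ℕ) : Continuous (hermiteFn n) := by
  rw [hermiteFn_eq]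
  exact (continuous_const.mul (PH n).continuous).mul
    (((continuous_pow 2).neg.div_const 2).rexp)

/-- The half-integral of the sign kernel. -/
noncomputable def Eps (n : ℕ) (x : ℝ) : ℝ :=
  (1/2) * ∫ t : ℝ, Real.sign (x - t) * hermiteFn n t

lemma eps_eq (n : ℕ) (x : ℝ) :
    Eps n x = (∫ t in (0:ℝ)..x, hermiteFn n t)
      + ((∫ t in Set.Iic (0:ℝ), hermiteFn n t) - (1/2) * ∫ t : ℝ, hermiteFn n t) := by
  have hi := hermiteFn_integrable n
  have hpt : (fun t => Real.sign (x - t) * hermiteFn n t)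
      = fun t => (Set.Iio x).indicator (hermiteFn n) t
        - (Set.Ioi x).indicator (hermiteFn n) t := by
    funext t
    rcases lt_trichotomy t x with h|h|h
    · rw [Set.indicator_of_mem (by exact h : t ∈ Set.Iio x),
        Set.indicator_of_notMem (by simp [not_lt.2 h.le] : t ∉ Set.Ioi x),
        Real.sign_of_pos (by linarith : 0 < x - t)]
      ring
    · subst h
      rw [Set.indicator_of_notMem (by simp : t ∉ Set.Iio t),
        Set.indicator_of_notMem (by simp : t ∉ Set.Ioi t), sub_self, Real.sign_zero]
      ring
    · rw [Set.indicator_of_notMem (by simp [not_lt.2 h.le] : t ∉ Set.Iio x),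
        Set.indicator_of_mem (by exact h : t ∈ Set.Ioi x),
        Real.sign_of_neg (by linarith : x - t < 0)]
      ring
  unfold Eps
  rw [hpt, integral_sub (hi.indicator measurableSet_Iio) (hi.indicator measurableSet_Ioi),
    integral_indicator measurableSet_Iio, integral_indicator measurableSet_Ioi,
    ← integral_Iic_eq_integral_Iio]
  have hIoi : (∫ t in Set.Iic x, hermiteFn n t) + ∫ t in Set.Ioi x, hermiteFn n t
      = ∫ t : ℝ, hermiteFn n t :=
    intervalIntegral.integral_Iic_add_Ioi hi.integrableOn hi.integrableOn
  have hsplit : (∫ t in Set.Iic x, hermiteFn n t) - ∫ t in Set.Iic (0:ℝ), hermiteFn n t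
      = ∫ t in (0:ℝ)..x, hermiteFn n t :=
    intervalIntegral.integral_Iic_sub_Iic hi.integrableOn hi.integrableOn
  linarith [hIoi, hsplit]

lemma eps_hasDerivAt (n : ℕ) (x : ℝ) : HasDerivAt (Eps n) (hermiteFn n x) x := by
  have hfun : Eps n = fun y => (∫ t in (0:ℝ)..y, hermiteFn n t)
      + ((∫ t in Set.Iic (0:ℝ), hermiteFn n t) - (1/2) * ∫ t : ℝ, hermiteFn n t) :=
    funext fun y => eps_eq n y
  rw [hfun]
  have hii : IntervalIntegrable (hermiteFn n) volume 0 x :=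
    (hermiteFn_integrable n).intervalIntegrable
  have h : HasDerivAt (fun u => ∫ t in (0:ℝ)..u, hermiteFn n t) (hermiteFn n x) x :=
    intervalIntegral.integral_hasDerivAt_right hii
      ((hermiteFn_continuous n).stronglyMeasurableAtFilter _ _)
      (hermiteFn_continuous n).continuousAt
  exact h.add_const _

end TauOde
namespace TauOde

noncomputable def T1f (n : ℕ) (y : ℝ) : ℝ :=
  Real.sqrt ((n:ℝ)/2) * ((y * hermiteFn (n-1) y - Real.sqrt (2*(n:ℝ)) * hermiteFn n y) * Eps n y
    + hermiteFn (n-1) y * hermiteFn n y)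

noncomputable def T2f (n : ℕ) (y : ℝ) : ℝ :=
  Real.sqrt ((n:ℝ)/2) * ((1 + y^2 - (Real.sqrt (2*(n:ℝ)))^2) * hermiteFn (n-1) y * Eps n y
    + (y * hermiteFn (n-1) y * hermiteFn n y
       - 2*Real.sqrt (2*(n:ℝ)) * hermiteFn n y ^ 2 + Real.sqrt (2*(n:ℝ)) * hermiteFn (n-1) y ^ 2))

noncomputable def T3f (n : ℕ) (y : ℝ) : ℝ :=
  Real.sqrt ((n:ℝ)/2) * ((2*y * hermiteFn (n-1) y
      + (1 + y^2 - (Real.sqrt (2*(n:ℝ)))^2)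
        * (y * hermiteFn (n-1) y - Real.sqrt (2*(n:ℝ)) * hermiteFn n y)) * Eps n y
    + (1 + y^2 - (Real.sqrt (2*(n:ℝ)))^2) * hermiteFn (n-1) y * hermiteFn n y
    + (hermiteFn (n-1) y * hermiteFn n y
       + y * (y * hermiteFn (n-1) y - Real.sqrt (2*(n:ℝ)) * hermiteFn n y) * hermiteFn n y
       + y * hermiteFn (n-1) y * (-y * hermiteFn n y + Real.sqrt (2*(n:ℝ)) * hermiteFn (n-1) y)
       - 4*Real.sqrt (2*(n:ℝ)) * hermiteFn n y
           * (-y * hermiteFn n y + Real.sqrt (2*(n:ℝ)) * hermiteFn (n-1) y)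
       + 2*Real.sqrt (2*(n:ℝ)) * hermiteFn (n-1) y
           * (y * hermiteFn (n-1) y - Real.sqrt (2*(n:ℝ)) * hermiteFn n y)))

variable {n : ℕ}


lemma hFd (hn : 1 ≤ n) (y : ℝ) : HasDerivAt (hermiteFn (n-1))
    (y * hermiteFn (n-1) y - Real.sqrt (2*(n:ℝ)) * hermiteFn n y) y := by
  have e1 : ((n-1:ℕ):ℝ) + 1 = (n:ℝ) := by
    rw [Nat.cast_sub hn]; push_cast; ring
  have hsub : n - 1 + 1 = n := Nat.sub_add_cancel hn
  have h := hermiteFn_raise (n-1) y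
  rw [hsub, e1] at h
  exact h

lemma hGd (n : ℕ) (y : ℝ) : HasDerivAt (hermiteFn n)
    (-y * hermiteFn n y + Real.sqrt (2*(n:ℝ)) * hermiteFn (n-1) y) y :=
  hermiteFn_lower n y

lemma hasDerivAt_tau (hn : 1 ≤ n) (y : ℝ) : HasDerivAt (tauFn n) (T1f n y) y := by
  have h := ((hFd hn y).const_mul (Real.sqrt ((n:ℝ)/2))).mul (eps_hasDerivAt n y)
  have h' : HasDerivAt (tauFn n)
      (Real.sqrt ((n:ℝ)/2) * (y * hermiteFn (n-1) y - Real.sqrt (2*(n:ℝ)) * hermiteFn n y)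
          * Eps n y
        + Real.sqrt ((n:ℝ)/2) * hermiteFn (n-1) y * hermiteFn n y) y := h
  convert h' using 1
  unfold T1f
  ring

lemma hasDerivAt_T1 (hn : 1 ≤ n) (y : ℝ) : HasDerivAt (T1f n) (T2f n y) y := by
  have hinner := ((hasDerivAt_id y).mul (hFd hn y)).sub ((hGd n y).const_mul (Real.sqrt (2*(n:ℝ))))
  have h := ((hinner.mul (eps_hasDerivAt n y)).add ((hFd hn y).mul (hGd n y))).const_mul
    (Real.sqrt ((n:ℝ)/2))
  have h' : HasDerivAt (T1f n)
      (Real.sqrt ((n:ℝ)/2) *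
        (((1 * hermiteFn (n-1) y
            + y * (y * hermiteFn (n-1) y - Real.sqrt (2*(n:ℝ)) * hermiteFn n y))
           - Real.sqrt (2*(n:ℝ))
             * (-y * hermiteFn n y + Real.sqrt (2*(n:ℝ)) * hermiteFn (n-1) y)) * Eps n y
          + (y * hermiteFn (n-1) y - Real.sqrt (2*(n:ℝ)) * hermiteFn n y) * hermiteFn n y
          + ((y * hermiteFn (n-1) y - Real.sqrt (2*(n:ℝ)) * hermiteFn n y) * hermiteFn n y
             + hermiteFn (n-1) y
               * (-y * hermiteFn n y + Real.sqrt (2*(n:ℝ)) * hermiteFn (n-1) y)))) y := h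
  convert h' using 1
  unfold T2f
  ring

lemma hasDerivAt_T2 (hn : 1 ≤ n) (y : ℝ) : HasDerivAt (T2f n) (T3f n y) y := by
  have hA := ((((hasDerivAt_pow 2 y).const_add 1).sub_const
      ((Real.sqrt (2*(n:ℝ)))^2)).mul (hFd hn y)).mul (eps_hasDerivAt n y)
  have hB := ((((hasDerivAt_id y).mul (hFd hn y)).mul (hGd n y)).sub
      (((hGd n y).pow 2).const_mul (2*Real.sqrt (2*(n:ℝ))))).add
      (((hFd hn y).pow 2).const_mul (Real.sqrt (2*(n:ℝ))))
  have h := (hA.add hB).const_mul (Real.sqrt ((n:ℝ)/2))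
  have h' : HasDerivAt (T2f n)
      (Real.sqrt ((n:ℝ)/2) *
        ((((2:ℕ) * y^(2-1) * hermiteFn (n-1) y
            + (1 + y^2 - (Real.sqrt (2*(n:ℝ)))^2)
              * (y * hermiteFn (n-1) y - Real.sqrt (2*(n:ℝ)) * hermiteFn n y)) * Eps n y
          + (1 + y^2 - (Real.sqrt (2*(n:ℝ)))^2) * hermiteFn (n-1) y * hermiteFn n y)
         + (((1 * hermiteFn (n-1) y
              + y * (y * hermiteFn (n-1) y - Real.sqrt (2*(n:ℝ)) * hermiteFn n y))
                * hermiteFn n y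
             + y * hermiteFn (n-1) y
                * (-y * hermiteFn n y + Real.sqrt (2*(n:ℝ)) * hermiteFn (n-1) y)
             - 2*Real.sqrt (2*(n:ℝ)) * ((2:ℕ) * hermiteFn n y ^ (2-1)
                 * (-y * hermiteFn n y + Real.sqrt (2*(n:ℝ)) * hermiteFn (n-1) y))
             + Real.sqrt (2*(n:ℝ)) * ((2:ℕ) * hermiteFn (n-1) y ^ (2-1)
                 * (y * hermiteFn (n-1) y - Real.sqrt (2*(n:ℝ)) * hermiteFn n y)))))) y := by
    exact h
  convert h' using 1
  unfold T3f
  push_cast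
  ring

end TauOde

theorem tau_ode (n : ℕ) (hn : 1 ≤ n) (x : ℝ) :
    2 * iteratedDeriv 3 (tauFn n) x + 2*(2*n - 1 - x^2) * deriv (tauFn n) x
        - 4*x * tauFn n x =
      (12*n - 1 - 6*x^2) * deriv (pGUE n) x + 6*x * pGUE n x := by
  have hd1 : deriv (tauFn n) = TauOde.T1f n :=
    funext fun y => (TauOde.hasDerivAt_tau hn y).deriv
  have hd2 : deriv (TauOde.T1f n) = TauOde.T2f n :=
    funext fun y => (TauOde.hasDerivAt_T1 hn y).deriv
  have hd3 : deriv (TauOde.T2f n) x = TauOde.T3f n x := (TauOde.hasDerivAt_T2 hn x).deriv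
  have hit : iteratedDeriv 3 (tauFn n) x = TauOde.T3f n x := by
    rw [show (3:ℕ) = 2+1 from rfl, iteratedDeriv_succ,
      show (2:ℕ) = 1+1 from rfl, iteratedDeriv_succ, iteratedDeriv_one, hd1, hd2, hd3]
  have htx : tauFn n x = Real.sqrt ((n:ℝ)/2) * hermiteFn (n-1) x * TauOde.Eps n x := rfl
  rw [hit, hd1, (TauOde.pGUE_hasDerivAt n x).deriv, TauOde.pGUE_closed n x, htx]
  unfold TauOde.T3f TauOde.T1f
  have h4 : Real.sqrt (4:ℝ) = 2 := by
    rw [show (4:ℝ) = 2^2 by norm_num, Real.sqrt_sq (by norm_num)]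
  have hc2 : Real.sqrt ((n:ℝ)/2) = Real.sqrt (2*(n:ℝ)) / 2 := by
    rw [show (n:ℝ)/2 = (2*(n:ℝ))/4 by ring, Real.sqrt_div (by positivity) 4, h4]
  rw [hc2]
  set a := Real.sqrt (2*(n:ℝ)) with ha0
  have han : ((n:ℕ):ℝ) = a^2/2 := by
    rw [ha0, Real.sq_sqrt (by positivity)]; ring
  rw [han]
  ring
end
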